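/- Let $\{\phi^k_h\}$ be vectors in $\mathbb{R}^d$ with $\|\phi^k_h\|_2 \leq 1/\sqrt{H}$ for all $(k,h) \in [K] \times [H]$. Define $\Lambda_1 = I$ and $\Lambda_{k+1} = \Lambda_k + \sum_{h=1}^H \phi^k_h (\phi^k_h)^\top$. Then $\sum_{k=1}^K \sum_{h=1}^H (\phi^k_h)^\top \Lambda_k^{-1} \phi^k_h \leq 2 \log(\det(\Lambda_{K+1})/\det(\Lambda_1))$. -/

import Mathlib

open Matrix

lemma aux_one_add_sum_le_prod {ι : Type*} (s : Finset ι) (f : ι → ℝ)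
    (hf : ∀ i ∈ s, 0 ≤ f i) : 1 + ∑ i ∈ s, f i ≤ ∏ i ∈ s, (1 + f i) := by
  classical
  induction s using Finset.induction with
  | empty => simp
  | @insert a s hxx ih =>
    rw [Finset.sum_insert hxx, Finset.prod_insert hxx]
    have h0 : 0 ≤ f a := hf a (Finset.mem_insert_self a s)
    have hs : ∀ i ∈ s, 0 ≤ f i := fun i hi => hf i (Finset.mem_insert_of_mem hi)
    have h1 : 1 + ∑ i ∈ s, f i ≤ ∏ i ∈ s, (1 + f i) := ih hs
    have hsum : 0 ≤ ∑ i ∈ s, f i := Finset.sum_nonneg hs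
    nlinarith

lemma aux_le_two_log {x : ℝ} (h0 : 0 ≤ x) (h1 : x ≤ 1) : x ≤ 2 * Real.log (1 + x) := by
  have hx : (0:ℝ) < 1 + x := by linarith
  have := Real.log_le_sub_one_of_pos (x := (1+x)⁻¹) (by positivity)
  rw [Real.log_inv] at this
  have hlog : 1 - (1+x)⁻¹ ≤ Real.log (1+x) := by linarith
  have hinv : (1+x)⁻¹ ≤ 1 - x/2 := by
    rw [inv_le_iff_one_le_mul₀ hx]
    nlinarith
  linarith

lemma aux_dp_self_nonneg {n : Type*} [Fintype n] (v : n → ℝ) : 0 ≤ v ⬝ᵥ v :=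
  Finset.sum_nonneg fun i _ => mul_self_nonneg (v i)

lemma aux_trace_mul_vecMulVec {n : Type*} [Fintype n] (M : Matrix n n ℝ) (v : n → ℝ) :
    (M * vecMulVec v v).trace = v ⬝ᵥ (M *ᵥ v) := by
  simp only [trace, diag, mul_apply, vecMulVec_apply, dotProduct, mulVec, dotProduct]
  congr 1; ext i
  rw [Finset.mul_sum]
  congr 1; ext j
  ring

lemma aux_inv_quad_le {n : Type*} [Fintype n] [DecidableEq n] {A : Matrix n n ℝ}
    (hA : A.PosDef) (hlow : ∀ x : n → ℝ, x ⬝ᵥ x ≤ x ⬝ᵥ (A *ᵥ x)) (x : n → ℝ) :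
    x ⬝ᵥ (A⁻¹ *ᵥ x) ≤ x ⬝ᵥ x := by
  classical
  set y := A⁻¹ *ᵥ x with hy
  have hdet : IsUnit A.det := isUnit_iff_ne_zero.mpr (ne_of_gt hA.det_pos)
  have hAy : A *ᵥ y = x := by
    rw [hy, mulVec_mulVec, mul_nonsing_inv _ hdet, one_mulVec]
  set t := x ⬝ᵥ y with ht
  have hty : t = y ⬝ᵥ (A *ᵥ y) := by rw [ht, ← hAy, dotProduct_comm]
  have hyy : y ⬝ᵥ y ≤ t := hty ▸ hlow y
  have hxx : 0 ≤ x ⬝ᵥ x := aux_dp_self_nonneg x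
  have hCS : t^2 ≤ (x ⬝ᵥ x) * (y ⬝ᵥ y) := by
    have := Finset.sum_mul_sq_le_sq_mul_sq Finset.univ x y
    simpa [dotProduct, sq, ht] using this
  have hynn : 0 ≤ y ⬝ᵥ y := aux_dp_self_nonneg y
  have htnn : 0 ≤ t := le_trans hynn hyy
  rcases eq_or_lt_of_le htnn with h | h
  · rw [← h]; exact hxx
  · nlinarith

lemma aux_det_one_add {n : Type*} [Fintype n] [DecidableEq n] {M : Matrix n n ℝ}
    (hM : M.PosSemidef) : 1 + M.trace ≤ (1 + M).det := by
  have hH := hM.isHermitian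
  have hspec := hH.spectral_theorem
  simp only [Unitary.conjStarAlgAut_apply] at hspec
  set U : Matrix n n ℝ := (hH.eigenvectorUnitary : Matrix n n ℝ) with hU
  have hUU : U * star U = 1 := (Matrix.mem_unitaryGroup_iff).mp hH.eigenvectorUnitary.2
  have hUU' : star U * U = 1 := (Matrix.mem_unitaryGroup_iff').mp hH.eigenvectorUnitary.2
  set D : Matrix n n ℝ := diagonal (RCLike.ofReal ∘ hH.eigenvalues) with hD
  have hone : (1 : Matrix n n ℝ) + M = U * (1 + D) * star U := by
    rw [mul_add, add_mul, mul_one, hUU, ← hspec]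
  have hdet : (1 + M).det = ∏ i, (1 + hH.eigenvalues i) := by
    rw [hone, det_mul_right_comm, hUU, one_mul]
    have : (1 : Matrix n n ℝ) + D = diagonal (fun i => 1 + hH.eigenvalues i) := by
      rw [hD, ← diagonal_one, diagonal_add]
      congr 1
    rw [this, det_diagonal]
  have htr : M.trace = ∑ i, hH.eigenvalues i := by
    conv_lhs => rw [hspec]
    rw [trace_mul_cycle, hUU', one_mul, hD, trace_diagonal]
    simp
  rw [hdet, htr]
  exact aux_one_add_sum_le_prod Finset.univ _ (fun i _ => hM.eigenvalues_nonneg i)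

lemma aux_det_lemma {n : Type*} [Fintype n] [DecidableEq n] {A B : Matrix n n ℝ}
    (hA : A.PosDef) (hB : B.PosSemidef) :
    A.det * (1 + (A⁻¹ * B).trace) ≤ (A + B).det := by
  have hAs := hA.posSemidef
  open scoped MatrixOrder in set S := CFC.sqrt A with hSdef
  have hSp : S.PosSemidef := by
    open scoped MatrixOrder in exact (CFC.sqrt_nonneg A).posSemidef
  have hSS : S * S = A := by
    open scoped MatrixOrder in exact CFC.sqrt_mul_sqrt_self A hAs.nonneg
  have hdetS : IsUnit S.det := by
    have h2 : S.det * S.det = A.det := by rw [← det_mul, hSS]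
    have : S.det ≠ 0 := by
      intro h; rw [h, mul_zero] at h2; exact (ne_of_gt hA.det_pos) h2.symm
    exact isUnit_iff_ne_zero.mpr this
  have hSinv : S * S⁻¹ = 1 := mul_nonsing_inv _ hdetS
  have hSinv' : S⁻¹ * S = 1 := nonsing_inv_mul _ hdetS
  have hSinvH : (S⁻¹)ᴴ = S⁻¹ := by
    rw [conjTranspose_nonsing_inv, hSp.isHermitian.eq]
  set M := S⁻¹ * B * S⁻¹ with hMdef
  have hM : M.PosSemidef := by
    have := hB.mul_mul_conjTranspose_same S⁻¹
    rwa [hSinvH] at this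
  have hkey : A + B = S * (1 + M) * S := by
    rw [mul_add, add_mul, mul_one, hSS, hMdef]
    congr 1
    symm
    calc S * (S⁻¹ * B * S⁻¹) * S = (S * S⁻¹) * (B * (S⁻¹ * S)) := by
          simp only [Matrix.mul_assoc]
      _ = B := by rw [hSinv, hSinv', mul_one, one_mul]
  have htr : (A⁻¹ * B).trace = M.trace := by
    rw [hMdef, trace_mul_cycle, ← hSS, Matrix.mul_inv_rev]
  have hdet : (A + B).det = A.det * (1 + M).det := by
    rw [hkey, det_mul, det_mul, mul_comm S.det, mul_assoc, ← det_mul, hSS]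
    ring
  rw [hdet, htr]
  have := aux_det_one_add hM
  nlinarith [hA.det_pos]

theorem elliptical_potential_lemma (d H K : ℕ)
    (φ : ℕ → ℕ → Fin d → ℝ)
    (hφ : ∀ k ∈ Finset.Icc 1 K, ∀ h ∈ Finset.Icc 1 H,
      Real.sqrt (φ k h ⬝ᵥ φ k h) ≤ 1 / Real.sqrt H)
    (Λ : ℕ → Matrix (Fin d) (Fin d) ℝ)
    (hΛ1 : Λ 1 = 1)
    (hΛ : ∀ k ∈ Finset.Icc 1 K,
      Λ (k + 1) = Λ k + ∑ h ∈ Finset.Icc 1 H, vecMulVec (φ k h) (φ k h)) :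
    ∑ k ∈ Finset.Icc 1 K, ∑ h ∈ Finset.Icc 1 H, φ k h ⬝ᵥ ((Λ k)⁻¹ *ᵥ φ k h) ≤
      2 * Real.log ((Λ (K + 1)).det / (Λ 1).det) := by
  classical
  set Φ : ℕ → Matrix (Fin d) (Fin d) ℝ :=
    fun k => ∑ h ∈ Finset.Icc 1 H, vecMulVec (φ k h) (φ k h) with hΦdef
  -- each rank-one matrix is PSD
  have hvv : ∀ (v : Fin d → ℝ), (vecMulVec v v).PosSemidef := by
    intro v
    have h1 : vecMulVec v v = replicateCol Unit v * (replicateCol Unit v)ᴴ := by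
      rw [conjTranspose_replicateCol, star_trivial, ← vecMulVec_eq Unit]
    rw [h1]
    exact posSemidef_self_mul_conjTranspose _
  have hpsum : ∀ (s : Finset ℕ) (f : ℕ → Matrix (Fin d) (Fin d) ℝ),
      (∀ i ∈ s, (f i).PosSemidef) → (∑ i ∈ s, f i).PosSemidef := by
    intro s f hf
    induction s using Finset.induction with
    | empty => simpa using Matrix.PosSemidef.zero
    | @insert a s has ih =>
      rw [Finset.sum_insert has]
      exact (hf a (Finset.mem_insert_self a s)).add
        (ih fun i hi => hf i (Finset.mem_insert_of_mem hi))
  have hΦpsd : ∀ k, (Φ k).PosSemidef := fun k =>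
    hpsum _ _ fun h _ => hvv (φ k h)
  -- structure of Λ k
  have hstruct : ∀ k, 1 ≤ k → k ≤ K + 1 → ∃ P : Matrix (Fin d) (Fin d) ℝ,
      P.PosSemidef ∧ Λ k = 1 + P := by
    intro k hk1
    induction k, hk1 using Nat.le_induction with
    | base => exact fun _ => ⟨0, Matrix.PosSemidef.zero, by simp [hΛ1]⟩
    | succ k hk ih =>
      intro hkK
      obtain ⟨P, hP, hPe⟩ := ih (by omega)
      refine ⟨P + Φ k, hP.add (hΦpsd k), ?_⟩
      rw [hΛ k (Finset.mem_Icc.mpr ⟨hk, by omega⟩), hPe, add_assoc]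
  have hposdef : ∀ k, 1 ≤ k → k ≤ K + 1 → (Λ k).PosDef := by
    intro k h1 h2
    obtain ⟨P, hP, hPe⟩ := hstruct k h1 h2
    rw [hPe]
    exact Matrix.PosDef.add_posSemidef Matrix.PosDef.one hP
  have hlow : ∀ k, 1 ≤ k → k ≤ K + 1 → ∀ x : Fin d → ℝ,
      x ⬝ᵥ x ≤ x ⬝ᵥ (Λ k *ᵥ x) := by
    intro k h1 h2 x
    obtain ⟨P, hP, hPe⟩ := hstruct k h1 h2
    rw [hPe, add_mulVec, one_mulVec, dotProduct_add]
    have := hP.dotProduct_mulVec_nonneg x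
    rw [star_trivial] at this
    linarith
  set L : ℕ → ℝ := fun k => Real.log (Λ k).det with hL
  -- the per-episode bound
  have key : ∀ k ∈ Finset.Icc 1 K,
      ∑ h ∈ Finset.Icc 1 H, φ k h ⬝ᵥ ((Λ k)⁻¹ *ᵥ φ k h) ≤ 2 * (L (k+1) - L k) := by
    intro k hk
    rw [Finset.mem_Icc] at hk
    have hkd : (Λ k).PosDef := hposdef k hk.1 (by omega)
    have hkd1 : (Λ (k+1)).PosDef := hposdef (k+1) (by omega) (by omega)
    set q := ∑ h ∈ Finset.Icc 1 H, φ k h ⬝ᵥ ((Λ k)⁻¹ *ᵥ φ k h) with hq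
    have hinv : (Λ k)⁻¹.PosDef := hkd.inv
    have hq0 : 0 ≤ q := by
      apply Finset.sum_nonneg
      intro h _
      have := hinv.posSemidef.dotProduct_mulVec_nonneg (φ k h)
      rwa [star_trivial] at this
    have hterm : ∀ h ∈ Finset.Icc 1 H, φ k h ⬝ᵥ ((Λ k)⁻¹ *ᵥ φ k h) ≤ 1 / (H:ℝ) := by
      intro h hh
      have h1 : φ k h ⬝ᵥ ((Λ k)⁻¹ *ᵥ φ k h) ≤ φ k h ⬝ᵥ φ k h :=
        aux_inv_quad_le hkd (hlow k hk.1 (by omega)) (φ k h)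
      have h2 := hφ k (Finset.mem_Icc.mpr hk) h hh
      have hH1 : 1 ≤ H := le_trans (Finset.mem_Icc.mp hh).1 (Finset.mem_Icc.mp hh).2
      have hHpos : (0:ℝ) < H := by exact_mod_cast hH1
      have h3 : φ k h ⬝ᵥ φ k h ≤ 1 / (H:ℝ) := by
        have hnn := aux_dp_self_nonneg (φ k h)
        have := mul_self_le_mul_self (Real.sqrt_nonneg _) h2
        rw [Real.mul_self_sqrt hnn] at this
        calc φ k h ⬝ᵥ φ k h ≤ 1 / Real.sqrt H * (1 / Real.sqrt H) := this
          _ = 1 / (H:ℝ) := by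
              rw [div_mul_div_comm, one_mul, Real.mul_self_sqrt hHpos.le]
      linarith
    have hq1 : q ≤ 1 := by
      have h1 : q ≤ ∑ _h ∈ Finset.Icc 1 H, 1 / (H:ℝ) := Finset.sum_le_sum hterm
      rw [Finset.sum_const, Nat.card_Icc, Nat.add_sub_cancel, nsmul_eq_mul] at h1
      rcases Nat.eq_zero_or_pos H with h0 | h0
      · simp only [h0, Nat.cast_zero] at h1
        norm_num at h1
        linarith
      · have hHpos : (0:ℝ) < H := by exact_mod_cast h0
        rw [mul_one_div, div_self (ne_of_gt hHpos)] at h1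
        exact h1
    have htrace : ((Λ k)⁻¹ * Φ k).trace = q := by
      rw [hΦdef, Finset.mul_sum, trace_sum]
      exact Finset.sum_congr rfl fun h _ => aux_trace_mul_vecMulVec _ _
    have hdetineq : (Λ k).det * (1 + q) ≤ (Λ (k+1)).det := by
      rw [hΛ k (Finset.mem_Icc.mpr hk), ← htrace]
      exact aux_det_lemma hkd (hΦpsd k)
    have hlogstep : Real.log ((Λ k).det * (1 + q)) ≤ L (k+1) :=
      Real.log_le_log (mul_pos hkd.det_pos (by linarith)) hdetineq
    rw [Real.log_mul (ne_of_gt hkd.det_pos) (by linarith)] at hlogstep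
    have h2log : q ≤ 2 * Real.log (1 + q) := aux_le_two_log hq0 hq1
    have : Real.log (1+q) ≤ L (k+1) - L k := by
      simp only [hL]
      linarith
    linarith
  calc ∑ k ∈ Finset.Icc 1 K, ∑ h ∈ Finset.Icc 1 H, φ k h ⬝ᵥ ((Λ k)⁻¹ *ᵥ φ k h)
      ≤ ∑ k ∈ Finset.Icc 1 K, 2 * (L (k+1) - L k) := Finset.sum_le_sum key
    _ = 2 * ∑ k ∈ Finset.Icc 1 K, (L (k+1) - L k) := by rw [Finset.mul_sum]
    _ = 2 * (L (K+1) - L 1) := by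
        congr 1
        rw [show Finset.Icc 1 K = Finset.Ico 1 (K+1) from (Finset.Ico_add_one_right_eq_Icc 1 K).symm,
          Finset.sum_Ico_eq_sum_range]
        have := Finset.sum_range_sub (fun i => L (i+1)) K
        simp only [Nat.add_sub_cancel]
        rw [← this]
        exact Finset.sum_congr rfl fun i _ => by rw [show 1+i = i+1 from by omega]
    _ = 2 * Real.log ((Λ (K + 1)).det / (Λ 1).det) := by
        simp only [hL]
        rw [hΛ1, det_one, div_one, Real.log_one, sub_zero]
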